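/- arXiv:2406.08776 — 2 statements merged into one kernel-verified Lean document; each statement's English description precedes it below -/
import Mathlib

section
/- Let P ∈ ℝ^{n×n} and W ∈ ℝ^{n×p}. Define M = C(P) ∩ C(W), and let P_{M⊥} denote orthogonal projection onto the orthogonal complement of M. Define R¹ = C(P_{M⊥}P) and R² = C(P_{M⊥}W). Then R¹ ∩ R² = {0}. -/
open Matrix

lemma toEuclideanLin_mul' {n m q : Type*} [Fintype n] [DecidableEq n] [Fintype m] [Fintype q] [DecidableEq q]
    (A : Matrix m n ℝ) (B : Matrix n q ℝ) :
    Matrix.toEuclideanLin (A * B) = (Matrix.toEuclideanLin A) ∘ₗ (Matrix.toEuclideanLin B) := by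
  ext x
  simp [Matrix.toEuclideanLin, Matrix.mulVec_mulVec]

/-- The column space of a matrix, as a submodule of Euclidean space. -/
noncomputable def colSpaceE {n : ℕ} {q : Type*} [Fintype q] [DecidableEq q]
    (A : Matrix (Fin n) q ℝ) : Submodule ℝ (EuclideanSpace ℝ (Fin n)) :=
  LinearMap.range (Matrix.toEuclideanLin A)

/-- The matrix of the orthogonal projection onto a subspace `K` of Euclidean space. -/
noncomputable def projMat {n : ℕ} (K : Submodule ℝ (EuclideanSpace ℝ (Fin n))) :
    Matrix (Fin n) (Fin n) ℝ :=
  Matrix.toEuclideanLin.symm ((K.subtypeL.comp (K.orthogonalProjection)).toLinearMap)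

/-- With `M = C(P) ∩ C(W)`, `R¹ = C(P_{M⊥} P)` and `R² = C(P_{M⊥} W)`, the individual
subspaces intersect trivially: `R¹ ∩ R² = {0}`. -/
theorem individual_subspaces_trivial_inter {n p : ℕ}
    (P : Matrix (Fin n) (Fin n) ℝ) (W : Matrix (Fin n) (Fin p) ℝ) :
    (colSpaceE (projMat (colSpaceE P ⊓ colSpaceE W)ᗮ * P)) ⊓
      (colSpaceE (projMat (colSpaceE P ⊓ colSpaceE W)ᗮ * W)) = ⊥ := by
  set M := colSpaceE P ⊓ colSpaceE W with hM
  set Q : EuclideanSpace ℝ (Fin n) →ₗ[ℝ] EuclideanSpace ℝ (Fin n) :=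
    ((Mᗮ.subtypeL.comp (Mᗮ.orthogonalProjection)).toLinearMap) with hQdef
  have hQ : Matrix.toEuclideanLin (projMat Mᗮ) = Q := by
    simp [projMat, hQdef]
  have hQzero : ∀ m ∈ M, Q m = 0 := by
    intro m hm
    have : m ∈ Mᗮᗮ := Submodule.le_orthogonal_orthogonal M hm
    simp [hQdef, Submodule.orthogonalProjectionOnto_apply_of_mem_orthogonal this]
  rw [eq_bot_iff]
  rintro x ⟨hx1, hx2⟩
  obtain ⟨a, ha⟩ := hx1
  obtain ⟨b, hb⟩ := hx2
  rw [toEuclideanLin_mul', hQ] at ha hb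
  set u := Matrix.toEuclideanLin P a with hu
  set v := Matrix.toEuclideanLin W b with hv
  have hQu : Q u = x := ha
  have hQv : Q v = x := hb
  have huv : u - v ∈ M := by
    have hk : Q (u - v) = 0 := by rw [map_sub, hQu, hQv, sub_self]
    have h0 : Mᗮ.orthogonalProjection (u - v) = 0 := by
      exact Submodule.coe_eq_zero.mp hk
    have : u - v ∈ Mᗮᗮ := Submodule.orthogonalProjectionOnto_eq_zero_iff.mp h0
    rwa [Submodule.orthogonal_orthogonal] at this
  have hvM : v ∈ M := by
    have hvP : v ∈ colSpaceE P := by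
      have huP : u ∈ colSpaceE P := ⟨a, rfl⟩
      have : u - (u - v) ∈ colSpaceE P :=
        Submodule.sub_mem _ huP (hM ▸ huv).1
      simpa using this
    have hvW : v ∈ colSpaceE W := ⟨b, rfl⟩
    exact ⟨hvP, hvW⟩
  have : x = 0 := by rw [← hQv, hQzero v hvM]
  simp [this]
end

section
/- Let V⁽¹⁾ = (M R⁽¹⁾) and V⁽²⁾ = (M R⁽²⁾) where M ∈ O_{n,r_M}, R⁽ᵏ⁾ ∈ O_{n,r_k}, MᵀR⁽ᵏ⁾ = 0 for k=1,2, and C(R⁽¹⁾) ∩ C(R⁽²⁾) = {0} with r_M, r₁, r₂ ≥ 1. Then the span of the eigenvectors of Q = V⁽¹⁾(V⁽¹⁾)ᵀ + V⁽²⁾(V⁽²⁾)ᵀ corresponding to its r_M largest eigenvalues equals C(M); i.e., every eigenvalue of Q on C(M) equals 2 and every other eigenvalue is strictly less than 2. -/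
open Matrix

/-- The column space of a matrix. -/
def colSpace {m q : Type*} [Fintype q] (A : Matrix m q ℝ) : Submodule ℝ (m → ℝ) :=
  LinearMap.range A.mulVecLin

/-- Rayleigh identity for a matrix with orthonormal columns. -/
lemma rayleigh_proj {N q : Type*} [Fintype N] [Fintype q] [DecidableEq q]
    (V : Matrix N q ℝ) (hV : Vᵀ * V = 1) (x : N → ℝ) :
    x ⬝ᵥ (V *ᵥ (Vᵀ *ᵥ x)) =
      x ⬝ᵥ x - (x - V *ᵥ (Vᵀ *ᵥ x)) ⬝ᵥ (x - V *ᵥ (Vᵀ *ᵥ x)) := by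
  set w := Vᵀ *ᵥ x with hw
  set p := V *ᵥ w with hp
  have hxp : x ⬝ᵥ p = w ⬝ᵥ w := by
    rw [hp, dotProduct_mulVec, ← mulVec_transpose, ← hw]
  have hpp : p ⬝ᵥ p = w ⬝ᵥ w := by
    rw [hp, dotProduct_mulVec, ← mulVec_transpose, mulVec_mulVec, hV, one_mulVec]
  have hpx : p ⬝ᵥ x = w ⬝ᵥ w := by rw [dotProduct_comm, hxp]
  rw [sub_dotProduct, dotProduct_sub, dotProduct_sub, hxp, hpx, hpp]
  ring

/-- With `V⁽¹⁾ = (M R⁽¹⁾)`, `V⁽²⁾ = (M R⁽²⁾)`, orthonormal columns, `MᵀR⁽ᵏ⁾ = 0`,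
`C(R⁽¹⁾) ∩ C(R⁽²⁾) = {0}` and `r_M, r₁, r₂ ≥ 1`, the top-`r_M` eigenspace of
`Q = V⁽¹⁾(V⁽¹⁾)ᵀ + V⁽²⁾(V⁽²⁾)ᵀ` is `C(M)`: every vector of `C(M)` is an eigenvector of `Q`
with eigenvalue `2`, and every eigenvalue with an eigenvector outside `C(M)` is `< 2`. -/
theorem leading_eigenspace_eq_joint {n rM r₁ r₂ : ℕ}
    (hrM : 1 ≤ rM) (hr₁ : 1 ≤ r₁) (hr₂ : 1 ≤ r₂)
    (M : Matrix (Fin n) (Fin rM) ℝ)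
    (R₁ : Matrix (Fin n) (Fin r₁) ℝ) (R₂ : Matrix (Fin n) (Fin r₂) ℝ)
    (hM : Mᵀ * M = 1) (hR₁ : R₁ᵀ * R₁ = 1) (hR₂ : R₂ᵀ * R₂ = 1)
    (hMR₁ : Mᵀ * R₁ = 0) (hMR₂ : Mᵀ * R₂ = 0)
    (hInter : colSpace R₁ ⊓ colSpace R₂ = ⊥)
    (Q : Matrix (Fin n) (Fin n) ℝ)
    (hQ : Q = Matrix.fromCols M R₁ * (Matrix.fromCols M R₁)ᵀ +
        Matrix.fromCols M R₂ * (Matrix.fromCols M R₂)ᵀ) :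
    (∀ x ∈ colSpace M, Q *ᵥ x = (2 : ℝ) • x) ∧
    (∀ (μ : ℝ) (x : Fin n → ℝ), x ≠ 0 → Q *ᵥ x = μ • x → x ∉ colSpace M → μ < 2) := by
  have hR₁M : R₁ᵀ * M = 0 := by
    have := congrArg Matrix.transpose hMR₁
    simpa [Matrix.transpose_mul] using this
  have hR₂M : R₂ᵀ * M = 0 := by
    have := congrArg Matrix.transpose hMR₂
    simpa [Matrix.transpose_mul] using this
  set V₁ := Matrix.fromCols M R₁ with hV₁def
  set V₂ := Matrix.fromCols M R₂ with hV₂def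
  have hV₁ : V₁ᵀ * V₁ = 1 := by
    rw [hV₁def, transpose_fromCols, fromRows_mul_fromCols, hM, hR₁, hMR₁, hR₁M,
      fromBlocks_one]
  have hV₂ : V₂ᵀ * V₂ = 1 := by
    rw [hV₂def, transpose_fromCols, fromRows_mul_fromCols, hM, hR₂, hMR₂, hR₂M,
      fromBlocks_one]
  have hQM : Q * M = (2 : ℝ) • M := by
    have h1 : V₁ᵀ * M = Matrix.fromRows (1 : Matrix (Fin rM) (Fin rM) ℝ) 0 := by
      rw [hV₁def, transpose_fromCols, fromRows_mul, hM, hR₁M]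
    have h2 : V₂ᵀ * M = Matrix.fromRows (1 : Matrix (Fin rM) (Fin rM) ℝ) 0 := by
      rw [hV₂def, transpose_fromCols, fromRows_mul, hM, hR₂M]
    rw [hQ, Matrix.add_mul, Matrix.mul_assoc, Matrix.mul_assoc, h1, h2, hV₁def, hV₂def,
      fromCols_mul_fromRows, fromCols_mul_fromRows]
    simp [two_smul]
  constructor
  · rintro x ⟨v, rfl⟩
    rw [Matrix.mulVecLin_apply, Matrix.mulVec_mulVec, hQM, Matrix.smul_mulVec]
  · intro μ x hx0 heig hxM
    have dnn : ∀ v : Fin n → ℝ, (0:ℝ) ≤ v ⬝ᵥ v :=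
      fun v => Finset.sum_nonneg fun i _ => mul_self_nonneg _
    by_contra hcon
    push_neg at hcon
    -- Rayleigh quotient computation
    have hxx : (0 : ℝ) < x ⬝ᵥ x := by
      rcases lt_or_eq_of_le (dnn x) with h | h
      · exact h
      · exact absurd (dotProduct_self_eq_zero.mp h.symm) hx0
    set u₁ := x - V₁ *ᵥ (V₁ᵀ *ᵥ x) with hu₁
    set u₂ := x - V₂ *ᵥ (V₂ᵀ *ᵥ x) with hu₂
    have hQx : x ⬝ᵥ (Q *ᵥ x) = (x ⬝ᵥ x - u₁ ⬝ᵥ u₁) + (x ⬝ᵥ x - u₂ ⬝ᵥ u₂) := by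
      rw [hQ, Matrix.add_mulVec, dotProduct_add, ← Matrix.mulVec_mulVec,
        ← Matrix.mulVec_mulVec, rayleigh_proj V₁ hV₁ x, rayleigh_proj V₂ hV₂ x]
    have hQx' : x ⬝ᵥ (Q *ᵥ x) = μ * (x ⬝ᵥ x) := by
      rw [heig, dotProduct_smul, smul_eq_mul]
    have hsum : u₁ ⬝ᵥ u₁ + u₂ ⬝ᵥ u₂ = (2 - μ) * (x ⬝ᵥ x) := by
      have := hQx.symm.trans hQx'
      linarith
    have h2μ : (2 - μ) * (x ⬝ᵥ x) ≤ 0 :=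
      mul_nonpos_of_nonpos_of_nonneg (by linarith) hxx.le
    have hn1 := dnn u₁
    have hn2 := dnn u₂
    have hu₁0 : u₁ = 0 := dotProduct_self_eq_zero.mp (by linarith)
    have hu₂0 : u₂ = 0 := dotProduct_self_eq_zero.mp (by linarith)
    have hx1 : x = M *ᵥ (Mᵀ *ᵥ x) + R₁ *ᵥ (R₁ᵀ *ᵥ x) := by
      have h := sub_eq_zero.mp hu₁0
      rwa [hV₁def, transpose_fromCols, fromRows_mulVec,
        fromCols_mulVec_sumElim] at h
    have hx2 : x = M *ᵥ (Mᵀ *ᵥ x) + R₂ *ᵥ (R₂ᵀ *ᵥ x) := by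
      have h := sub_eq_zero.mp hu₂0
      rwa [hV₂def, transpose_fromCols, fromRows_mulVec,
        fromCols_mulVec_sumElim] at h
    set y := x - M *ᵥ (Mᵀ *ᵥ x) with hy
    have hy1 : y = R₁ *ᵥ (R₁ᵀ *ᵥ x) := by rw [hy]; nth_rewrite 1 [hx1]; abel
    have hy2 : y = R₂ *ᵥ (R₂ᵀ *ᵥ x) := by rw [hy]; nth_rewrite 1 [hx2]; abel
    have hymem : y ∈ colSpace R₁ ⊓ colSpace R₂ :=
      ⟨⟨R₁ᵀ *ᵥ x, hy1.symm⟩, ⟨R₂ᵀ *ᵥ x, hy2.symm⟩⟩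
    rw [hInter, Submodule.mem_bot] at hymem
    have : x = M *ᵥ (Mᵀ *ᵥ x) := by
      have := sub_eq_zero.mp hymem
      exact this
    exact hxM ⟨Mᵀ *ᵥ x, this.symm⟩
end
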